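/- Let x ∈ Ω_m^2(−1) (i.e. x is a linear combination of tensors e_1⊠⋯⊠e_m with each e_i ∈ {a,b,c} and exactly one e_i = b). Then for all k ≥ 1 and all 1 ≤ i ≤ k+1, s_i(x^{⋄k}) = 0, where s_i are the degeneracy-type operators deleting the i-th slot. The key step: for any two basis vectors v, w of Ω_m^2(−1), the graded ⋄-commutator [v,w]_⋄ = v⋄w + w⋄v (both have odd degree −1) is annihilated by all s_i; in particular x⋄x = ½[x,x]_⋄ is normalized, and normalization propagates to all powers x^{⋄k}. -/

import Mathlib

/-
STATEMENT 17: Let x ∈ Ω_m²(−1), i.e. a linear combination of tensors e₁⊠⋯⊠e_m of single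
letters (0 = a, 1 = b, 2 = c) with exactly one e_i = b.  Then s_i(x^{⋄k}) = 0 for all
k ≥ 1 and 1 ≤ i ≤ k+1, where the s_i are the (diagonally extended) leaf-deletion
operators.  The key step: for any two such basis vectors v,w, the graded ⋄-commutator
[v,w]_⋄ = v⋄w + w⋄v is annihilated by all s_i.  The product ⋄ on Ω_m = Ω^{⊠m} is the
componentwise concatenation with Koszul signs (determined by the b-counts), and on a
word e₁⋯e_k the operator s_i (deleting the i-th leaf of the corresponding short forest)
either merges the adjacent letters, removes a boundary letter, or gives 0, as follows.
-/

noncomputable section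

abbrev Word := FreeMonoid (Fin 3)
abbrev Tm (m : ℕ) : Type := (Fin m → Word) →₀ ℝ

def bcount (w : Word) : ℕ := (FreeMonoid.toList w).count 1

/-- the effect of the leaf-deletion operator s_i on a single word (`none` means 0):
deleting the i-th leaf of the short forest with k+1 leaves corresponding to a word of
length k.  If the leaf shares its branch with a neighbour (an adjacent letter a) or is
the unique leaf of its tree (both adjacent letters c, or a boundary letter c), the two
adjacent letters are merged (to their maximum) resp. the boundary letter is removed;
otherwise the result is 0. -/
def sList (i : ℕ) (w : List (Fin 3)) : Option (List (Fin 3)) :=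
  if i = 0 ∨ w.length + 1 < i then none
  else if w = [] then some []
  else if i = 1 then (if w.head? = some 1 then none else some w.tail)
  else if i = w.length + 1 then (if w.getLast? = some 1 then none else some w.dropLast)
  else
    let x := w.getD (i - 2) 0
    let y := w.getD (i - 1) 0
    if x = 0 ∨ y = 0 ∨ (x = 2 ∧ y = 2) then
      some (w.take (i - 2) ++ [max x y] ++ w.drop i)
    else none

/-- s_i on Ω_m, extended diagonally: s_i(c₁⊠⋯⊠c_m) = s_i(c₁)⊠⋯⊠s_i(c_m). -/
def sM (m i : ℕ) : Tm m →ₗ[ℝ] Tm m :=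
  Finsupp.lift (Tm m) ℝ (Fin m → Word) fun ws =>
    if ∀ j, (sList i (FreeMonoid.toList (ws j))).isSome then
      Finsupp.single
        (fun j => FreeMonoid.ofList ((sList i (FreeMonoid.toList (ws j))).getD [])) 1
    else 0

/-- Koszul sign exponent for the componentwise product on Ω^{⊠m}. -/
def koz {m : ℕ} (p q : Fin m → Word) : ℕ :=
  ∑ j : Fin m, ∑ j' ∈ Finset.univ.filter (fun j' => j' < j), bcount (p j) * bcount (q j')

/-- the product ⋄ on Ω_m = Ω^{⊠m}: componentwise concatenation with Koszul signs. -/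
def mulM {m : ℕ} (f g : Tm m) : Tm m :=
  f.sum fun p r => g.sum fun q s =>
    Finsupp.single (fun j => p j * q j) (r * s * ((-1 : ℝ) ^ (koz p q)))

/-- ⋄-powers. -/
def powM {m : ℕ} (x : Tm m) : ℕ → Tm m
  | 0 => Finsupp.single (fun _ => 1) 1
  | k + 1 => mulM x (powM x k)

/-- the basis tensor of single letters given by e : Fin m → Fin 3. -/
def bs {m : ℕ} (e : Fin m → Fin 3) : Tm m :=
  Finsupp.single (fun j => FreeMonoid.of (e j)) 1

lemma sList_pair (c d : Fin 3) :
    sList 2 [c, d] = if c = 0 ∨ d = 0 ∨ (c = 2 ∧ d = 2) then some [max c d] else none := by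
  revert c d; decide

lemma sList_pair_comm (c d : Fin 3) : sList 2 [c,d] = sList 2 [d,c] := by revert c d; decide

lemma sList_one_cons (t : List (Fin 3)) : sList 1 (1 :: t) = none := by
  simp [sList]

lemma sList_single (c : Fin 3) :
    sList 2 [c] = if c = 1 then none else some [] := by revert c; decide

lemma sList_of_big (i : ℕ) (w : List (Fin 3)) (h : w.length + 1 < i) : sList i w = none := by
  rw [sList, if_pos (Or.inr h)]

lemma sList_interior (i : ℕ) (w : List (Fin 3)) (h2 : 2 ≤ i) (hle : i ≤ w.length) :
    sList i w = (if w.getD (i-2) 0 = 0 ∨ w.getD (i-1) 0 = 0 ∨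
        (w.getD (i-2) 0 = 2 ∧ w.getD (i-1) 0 = 2)
      then some (w.take (i-2) ++ [max (w.getD (i-2) 0) (w.getD (i-1) 0)] ++ w.drop i)
      else none) := by
  have hw : w ≠ [] := by
    intro h; subst h; simp at hle; omega
  rw [sList, if_neg (by omega), if_neg hw, if_neg (by omega), if_neg (by omega)]

lemma sList_last (w : List (Fin 3)) (hw : w ≠ []) (h2 : 1 ≤ w.length) :
    sList (w.length + 1) w = if w.getLast? = some 1 then none else some w.dropLast := by
  rw [sList, if_neg (by omega), if_neg hw, if_neg (by omega), if_pos rfl]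

lemma sList_two_cons (c d : Fin 3) (r : List (Fin 3)) :
    sList 2 (c :: d :: r) = if c = 0 ∨ d = 0 ∨ (c = 2 ∧ d = 2)
      then some (max c d :: r) else none := by
  rw [sList_interior 2 _ (le_refl _) (by simp only [List.length_cons]; omega)]
  rfl

lemma sList_cons (a : Fin 3) (l : List (Fin 3)) (i : ℕ) (h : 2 ≤ i) :
    sList (i+1) (a :: l) = Option.map (a :: ·) (sList i l) := by
  rcases lt_trichotomy i (l.length + 1) with hlt | heq | hgt
  · -- interior: 2 ≤ i ≤ l.length
    have hle : i ≤ l.length := by omega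
    rw [sList_interior (i+1) _ (by omega) (by simp only [List.length_cons]; omega),
      sList_interior i _ h hle]
    have e1 : i + 1 - 2 = (i - 2) + 1 := by omega
    have e2 : i + 1 - 1 = (i - 1) + 1 := by omega
    rw [e1, e2, List.getD_cons_succ, List.getD_cons_succ, List.take_succ_cons,
      List.drop_succ_cons]
    split_ifs with hc
    · simp
    · rfl
  · subst heq
    have hl : l ≠ [] := by intro h'; subst h'; simp at h
    have : (a :: l).length = l.length + 1 := by simp
    rw [show l.length + 1 + 1 = (a :: l).length + 1 by simp,
      sList_last _ (by simp) (by simp), sList_last l hl (by omega)]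
    obtain ⟨b, t, rfl⟩ : ∃ b t, l = b :: t := by
      rcases l with _ | ⟨b, t⟩; · exact absurd rfl hl
      exact ⟨b, t, rfl⟩
    rw [List.getLast?_cons_cons, List.dropLast_cons_of_ne_nil (by simp)]
    split_ifs with hc
    · rfl
    · rfl
  · rw [sList_of_big _ _ (by simp only [List.length_cons]; omega), sList_of_big _ _ hgt]
    rfl

lemma sList_shift (u w : List (Fin 3)) :
    sList (u.length + 2) (u ++ w) = Option.map (u ++ ·) (sList 2 w) := by
  induction u with
  | nil => simp only [List.length_nil, List.nil_append, Nat.zero_add]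
           rcases sList 2 w with _ | l <;> simp
  | cons a u ih =>
    rw [show (a :: u).length + 2 = (u.length + 2) + 1 by simp, List.cons_append,
      sList_cons a (u ++ w) _ (by omega), ih]
    rcases sList 2 w with _ | l <;> simp

lemma sList_left2 (c d : Fin 3) (r : List (Fin 3)) :
    sList 2 (c :: d :: r) = Option.map (· ++ r) (sList 2 [c, d]) := by
  rw [sList_two_cons, sList_pair]
  split_ifs <;> simp

lemma sList_count (w w' : List (Fin 3)) (h : sList 2 w = some w') :
    w'.count 1 = w.count 1 := by
  match w with
  | [] => rw [sList_of_big 2 [] (by simp)] at h; cases h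
  | [c] =>
    rw [sList_single] at h
    split_ifs at h with hc
    cases h
    simp [List.count_cons, hc]
  | c :: d :: t =>
    rw [sList_two_cons] at h
    split_ifs at h with hc
    cases h
    have key : (if max c d = 1 then 1 else 0) =
        (if d = 1 then 1 else 0) + (if c = 1 then 1 else 0) := by
      revert hc; revert c d; decide
    simp only [List.count_cons, beq_iff_eq, key]
    omega

lemma bcount_mul (u v : Word) : bcount (u * v) = bcount u + bcount v := by
  simp [bcount, FreeMonoid.toList_mul, List.count_append]

lemma bcount_one : bcount (1 : Word) = 0 := by simp [bcount]

lemma bcount_of (c : Fin 3) : bcount (FreeMonoid.of c) = if c = 1 then 1 else 0 := by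
  revert c; decide

lemma koz_mul_left {m : ℕ} (p q t : Fin m → Word) :
    koz (fun j => p j * q j) t = koz p t + koz q t := by
  simp [koz, bcount_mul, add_mul, Finset.sum_add_distrib]

lemma koz_mul_right {m : ℕ} (p q t : Fin m → Word) :
    koz p (fun j => q j * t j) = koz p q + koz p t := by
  simp [koz, bcount_mul, mul_add, Finset.sum_add_distrib]

lemma koz_congr_right {m : ℕ} (p q q' : Fin m → Word) (h : ∀ j, bcount (q' j) = bcount (q j)) :
    koz p q' = koz p q := by simp [koz, h]

lemma koz_congr_left {m : ℕ} (p p' q : Fin m → Word) (h : ∀ j, bcount (p' j) = bcount (p j)) :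
    koz p' q = koz p q := by simp [koz, h]

lemma koz_one_right {m : ℕ} (p : Fin m → Word) : koz p (fun _ => 1) = 0 := by
  simp [koz, bcount_one]

lemma koz_one_left {m : ℕ} (p : Fin m → Word) : koz (fun _ => 1) p = 0 := by
  simp [koz, bcount_one]

lemma mulM_single_single {m : ℕ} (p q : Fin m → Word) (r s : ℝ) :
    mulM (Finsupp.single p r) (Finsupp.single q s)
      = Finsupp.single (fun j => p j * q j) (r * s * (-1 : ℝ)^(koz p q)) := by
  rw [mulM, Finsupp.sum_single_index (by simp), Finsupp.sum_single_index (by simp)]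

lemma mulM_zero_left {m : ℕ} (g : Tm m) : mulM 0 g = 0 := by simp [mulM]

lemma mulM_zero_right {m : ℕ} (f : Tm m) : mulM f 0 = 0 := by simp [mulM]

lemma mulM_add_left {m : ℕ} (f f' g : Tm m) :
    mulM (f + f') g = mulM f g + mulM f' g := by
  rw [mulM, mulM, mulM,
    Finsupp.sum_add_index' (fun p => by simp) (fun p r r' => by
      rw [← Finsupp.sum_add]
      apply Finsupp.sum_congr
      intro q _
      rw [← Finsupp.single_add]
      congr 1; ring)]

lemma mulM_add_right {m : ℕ} (f g g' : Tm m) :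
    mulM f (g + g') = mulM f g + mulM f g' := by
  rw [mulM, mulM, mulM, ← Finsupp.sum_add]
  congr 1; funext p r
  rw [Finsupp.sum_add_index' (fun q => by simp) (fun q s s' => by
    rw [← Finsupp.single_add]
    congr 1; ring)]

lemma mulM_smul_left {m : ℕ} (a : ℝ) (f g : Tm m) :
    mulM (a • f) g = a • mulM f g := by
  rw [mulM, mulM, Finsupp.sum_smul_index (by simp), Finsupp.smul_sum]
  congr 1; funext p r
  rw [Finsupp.smul_sum]
  congr 1; funext q s
  rw [Finsupp.smul_single, smul_eq_mul]
  congr 1; ring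

lemma mulM_smul_right {m : ℕ} (a : ℝ) (f g : Tm m) :
    mulM f (a • g) = a • mulM f g := by
  rw [mulM, mulM, Finsupp.smul_sum]
  congr 1; funext p r
  rw [Finsupp.sum_smul_index (by simp), Finsupp.smul_sum]
  congr 1; funext q s
  rw [Finsupp.smul_single, smul_eq_mul]
  congr 1; ring

def mulRight {m : ℕ} (z : Tm m) : Tm m →+ Tm m :=
  AddMonoidHom.mk' (fun u => mulM u z) (fun a b => mulM_add_left a b z)

def mulLeft {m : ℕ} (z : Tm m) : Tm m →+ Tm m :=
  AddMonoidHom.mk' (fun u => mulM z u) (mulM_add_right z)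

lemma mulM_sum_left {m : ℕ} (u z : Tm m) :
    mulM u z = u.sum fun p r => mulM (Finsupp.single p r) z := by
  conv_lhs => rw [← Finsupp.sum_single u]
  exact map_finsuppSum (mulRight z) u _

lemma mulM_sum_right {m : ℕ} (u z : Tm m) :
    mulM u z = z.sum fun q s => mulM u (Finsupp.single q s) := by
  conv_lhs => rw [← Finsupp.sum_single z]
  exact map_finsuppSum (mulLeft u) z _

def sOK (i : ℕ) {m : ℕ} (p : Fin m → Word) : Prop :=
  ∀ j, (sList i (FreeMonoid.toList (p j))).isSome

instance (i : ℕ) {m : ℕ} (p : Fin m → Word) : Decidable (sOK i p) := by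
  unfold sOK; infer_instance

def sRes (i : ℕ) {m : ℕ} (p : Fin m → Word) : Fin m → Word :=
  fun j => FreeMonoid.ofList ((sList i (FreeMonoid.toList (p j))).getD [])

lemma sM_single {m : ℕ} (i : ℕ) (p : Fin m → Word) (r : ℝ) :
    sM m i (Finsupp.single p r)
      = if sOK i p then Finsupp.single (sRes i p) r else 0 := by
  rw [sM, Finsupp.lift_apply, Finsupp.sum_single_index (by simp)]
  unfold sOK sRes
  split_ifs with h
  · rw [Finsupp.smul_single]
    refine Eq.trans ?_ (if_pos h).symm
    congr 1
    simp
  · rw [smul_zero]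
    exact (if_neg h).symm

lemma mulM_one {m : ℕ} (f : Tm m) : mulM f (Finsupp.single (fun _ => 1) 1) = f := by
  induction f using Finsupp.induction_linear with
  | zero => rw [mulM_zero_left]
  | add f g hf hg => rw [mulM_add_left, hf, hg]
  | single p r => rw [mulM_single_single, koz_one_right]; simp

lemma one_mulM {m : ℕ} (f : Tm m) : mulM (Finsupp.single (fun _ => 1) 1) f = f := by
  induction f using Finsupp.induction_linear with
  | zero => rw [mulM_zero_right]
  | add f g hf hg => rw [mulM_add_right, hf, hg]
  | single p r => rw [mulM_single_single, koz_one_left]; simp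

lemma mulM_assoc {m : ℕ} (f g h : Tm m) : mulM (mulM f g) h = mulM f (mulM g h) := by
  induction f using Finsupp.induction_linear with
  | zero => simp [mulM_zero_left, mulM_zero_right]
  | add f f' hf hf' => rw [mulM_add_left, mulM_add_left, mulM_add_left, hf, hf']
  | single p r =>
    induction g using Finsupp.induction_linear with
    | zero => simp [mulM_zero_left, mulM_zero_right]
    | add g g' hg hg' =>
      rw [mulM_add_right, mulM_add_left, mulM_add_left, mulM_add_right, hg, hg']
    | single q s =>
      induction h using Finsupp.induction_linear with
      | zero => simp [mulM_zero_left, mulM_zero_right]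
      | add h h' hh hh' => rw [mulM_add_right, mulM_add_right, mulM_add_right, hh, hh']
      | single t u =>
        rw [mulM_single_single, mulM_single_single, mulM_single_single, mulM_single_single]
        have e : (fun j => (p j * q j) * t j) = fun j => p j * (q j * t j) :=
          funext fun j => mul_assoc _ _ _
        rw [e]
        congr 1
        rw [koz_mul_left, koz_mul_right, pow_add, pow_add]
        ring

lemma powM_one {m : ℕ} (x : Tm m) : powM x 1 = x := by
  rw [powM, powM, mulM_one]

lemma powM_add {m : ℕ} (x : Tm m) (a b : ℕ) :
    powM x (a + b) = mulM (powM x a) (powM x b) := by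
  induction a with
  | zero => rw [Nat.zero_add, powM, one_mulM]
  | succ a ih =>
    rw [show a + 1 + b = (a + b) + 1 by omega, powM, powM, ih, mulM_assoc]

lemma mulM_support {m : ℕ} (u v : Tm m) :
    ∀ p ∈ (mulM u v).support, ∃ p' ∈ u.support, ∃ q' ∈ v.support,
      p = fun j => p' j * q' j := by
  classical
  intro p hp
  rw [mulM] at hp
  have h1 := Finsupp.support_sum hp
  obtain ⟨p', hp', h2⟩ := Finset.mem_biUnion.1 h1
  have h3 := Finsupp.support_sum h2
  obtain ⟨q', hq', h4⟩ := Finset.mem_biUnion.1 h3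
  have h5 := Finsupp.support_single_subset h4
  exact ⟨p', hp', q', hq', Finset.mem_singleton.1 h5⟩

def LenP (l : ℕ) {m : ℕ} (u : Tm m) : Prop :=
  ∀ p ∈ u.support, ∀ j, (FreeMonoid.toList (p j)).length = l

lemma LenP_mul {m : ℕ} {l l' : ℕ} (u v : Tm m) (hu : LenP l u) (hv : LenP l' v) :
    LenP (l + l') (mulM u v) := by
  intro p hp j
  obtain ⟨p', hp', q', hq', rfl⟩ := mulM_support u v p hp
  simp [FreeMonoid.toList_mul, hu p' hp' j, hv q' hq' j]

lemma LenP_one {m : ℕ} : LenP 0 (Finsupp.single (fun _ => (1:Word)) (1:ℝ) : Tm m) := by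
  intro p hp j
  have := Finsupp.support_single_subset hp
  rw [Finset.mem_singleton.1 this]
  simp

lemma LenP_powM {m : ℕ} (x : Tm m) (hx : LenP 1 x) (k : ℕ) : LenP k (powM x k) := by
  induction k with
  | zero => exact LenP_one
  | succ k ih =>
    rw [powM]
    have := LenP_mul x (powM x k) hx ih
    rwa [Nat.add_comm] at this

lemma sList_left2' (w r : List (Fin 3)) (h : w.length = 2) :
    sList 2 (w ++ r) = Option.map (· ++ r) (sList 2 w) := by
  match w, h with
  | [c, d], _ => exact sList_left2 c d r

lemma bcount_sRes2 {m : ℕ} (q : Fin m → Word) (h : sOK 2 q) (j : Fin m) :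
    bcount (sRes 2 q j) = bcount (q j) := by
  obtain ⟨w', hw'⟩ := Option.isSome_iff_exists.1 (h j)
  unfold sRes bcount
  rw [hw', Option.getD_some, FreeMonoid.toList_ofList]
  exact sList_count _ _ hw'

lemma shift_key {m l : ℕ} (p q : Fin m → Word)
    (hp : ∀ j, (FreeMonoid.toList (p j)).length = l) (r s : ℝ) :
    sM m (l+2) (mulM (Finsupp.single p r) (Finsupp.single q s))
      = mulM (Finsupp.single p r) (sM m 2 (Finsupp.single q s)) := by
  rw [mulM_single_single, sM_single, sM_single]
  have hs : ∀ j, sList (l+2) (FreeMonoid.toList (p j * q j))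
      = Option.map (FreeMonoid.toList (p j) ++ ·) (sList 2 (FreeMonoid.toList (q j))) := by
    intro j
    rw [FreeMonoid.toList_mul, ← hp j, sList_shift]
  have hcond : sOK (l+2) (fun j => p j * q j) ↔ sOK 2 q := by
    unfold sOK
    constructor <;> intro h j <;> have hh := h j
    · rw [hs j, Option.isSome_map] at hh; exact hh
    · rw [hs j, Option.isSome_map]; exact hh
  by_cases h : sOK 2 q
  · rw [if_pos h, if_pos (hcond.2 h), mulM_single_single]
    have hres : sRes (l+2) (fun j => p j * q j) = fun j => p j * sRes 2 q j := by
      funext j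
      unfold sRes
      obtain ⟨w', hw'⟩ := Option.isSome_iff_exists.1 (h j)
      rw [hs j, hw']
      simp only [Option.map_some, Option.getD_some, FreeMonoid.ofList_append,
        FreeMonoid.ofList_toList]
    rw [hres]
    congr 1
    rw [koz_congr_right p q (sRes 2 q) (bcount_sRes2 q h)]
  · rw [if_neg h, if_neg (fun hc => h (hcond.1 hc)), mulM_zero_right]

lemma left_key {m : ℕ} (p q : Fin m → Word)
    (hp : ∀ j, (FreeMonoid.toList (p j)).length = 2) (r s : ℝ) :
    sM m 2 (mulM (Finsupp.single p r) (Finsupp.single q s))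
      = mulM (sM m 2 (Finsupp.single p r)) (Finsupp.single q s) := by
  rw [mulM_single_single, sM_single, sM_single]
  have hs : ∀ j, sList 2 (FreeMonoid.toList (p j * q j))
      = Option.map (· ++ FreeMonoid.toList (q j)) (sList 2 (FreeMonoid.toList (p j))) := by
    intro j
    rw [FreeMonoid.toList_mul, sList_left2' _ _ (hp j)]
  have hcond : sOK 2 (fun j => p j * q j) ↔ sOK 2 p := by
    unfold sOK
    constructor <;> intro h j <;> have hh := h j
    · rw [hs j, Option.isSome_map] at hh; exact hh
    · rw [hs j, Option.isSome_map]; exact hh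
  by_cases h : sOK 2 p
  · rw [if_pos h, if_pos (hcond.2 h), mulM_single_single]
    have hres : sRes 2 (fun j => p j * q j) = fun j => sRes 2 p j * q j := by
      funext j
      unfold sRes
      obtain ⟨w', hw'⟩ := Option.isSome_iff_exists.1 (h j)
      rw [hs j, hw']
      simp only [Option.map_some, Option.getD_some, FreeMonoid.ofList_append,
        FreeMonoid.ofList_toList]
    rw [hres]
    congr 1
    rw [koz_congr_left p (sRes 2 p) q (bcount_sRes2 p h)]
  · rw [if_neg h, if_neg (fun hc => h (hcond.1 hc)), mulM_zero_left]

lemma mulM_fsum_right {m : ℕ} (u : Tm m) {α M : Type*} [Zero M] (f : α →₀ M)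
    (g : α → M → Tm m) :
    mulM u (f.sum g) = f.sum fun a b => mulM u (g a b) :=
  map_finsuppSum (mulLeft u) f g

lemma mulM_fsum_left {m : ℕ} (z : Tm m) {α M : Type*} [Zero M] (f : α →₀ M)
    (g : α → M → Tm m) :
    mulM (f.sum g) z = f.sum fun a b => mulM (g a b) z :=
  map_finsuppSum (mulRight z) f g

lemma shift_mul {m l : ℕ} (u z : Tm m) (hu : LenP l u) :
    sM m (l+2) (mulM u z) = mulM u (sM m 2 z) := by
  rw [mulM_sum_left u z, map_finsuppSum, mulM_sum_left u (sM m 2 z)]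
  apply Finsupp.sum_congr
  intro p hp
  conv_rhs => rw [← Finsupp.sum_single z]
  rw [map_finsuppSum (sM m 2), mulM_fsum_right]
  conv_lhs => rw [mulM_sum_right (Finsupp.single p (u p)) z, map_finsuppSum]
  apply Finsupp.sum_congr
  intro q _
  exact shift_key p q (hu p hp) (u p) (z q)

lemma left_mul {m : ℕ} (u z : Tm m) (hu : LenP 2 u) :
    sM m 2 (mulM u z) = mulM (sM m 2 u) z := by
  rw [mulM_sum_left u z]
  conv_rhs => rw [← Finsupp.sum_single u, map_finsuppSum (sM m 2), mulM_fsum_left]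
  rw [map_finsuppSum]
  apply Finsupp.sum_congr
  intro p hp
  rw [mulM_sum_right (Finsupp.single p (u p)) z, map_finsuppSum]
  conv_rhs => rw [mulM_sum_right (sM m 2 (Finsupp.single p (u p))) z]
  apply Finsupp.sum_congr
  intro q _
  exact left_key p q (hu p hp) (u p) (z q)

lemma koz_bs {m : ℕ} (e f : Fin m → Fin 3) (j0 j1 : Fin m)
    (he : e j0 = 1) (hfu : ∀ j, f j = 1 → j = j1) (hf1 : f j1 = 1)
    (heu : ∀ j, e j = 1 → j = j0) :
    koz (fun j => FreeMonoid.of (e j)) (fun j => FreeMonoid.of (f j))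
      = if j1 < j0 then 1 else 0 := by
  unfold koz
  rw [Finset.sum_eq_single j0 ?hother ?hnot]
  case hother =>
    intro j _ hj
    apply Finset.sum_eq_zero
    intro j' _
    have : e j ≠ 1 := fun hc => hj (heu j hc)
    rw [bcount_of, if_neg this, zero_mul]
  case hnot => intro hj; exact absurd (Finset.mem_univ j0) hj
  by_cases hlt : j1 < j0
  · rw [if_pos hlt]
    rw [Finset.sum_eq_single j1 ?ho2 ?hn2]
    · rw [bcount_of, bcount_of, if_pos he, if_pos hf1]
    case ho2 =>
      intro j' hj' hne
      have : f j' ≠ 1 := fun hc => hne (hfu j' hc)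
      rw [bcount_of, bcount_of, if_neg this, mul_zero]
    case hn2 =>
      intro hj'
      exact absurd (by simpa using hlt) hj'
  · rw [if_neg hlt]
    apply Finset.sum_eq_zero
    intro j' hj'
    have hj'lt : j' < j0 := (Finset.mem_filter.1 hj').2
    have : f j' ≠ 1 := fun hc => hlt ((hfu j' hc) ▸ hj'lt)
    rw [bcount_of, bcount_of, if_neg this, mul_zero]

lemma toList_of_mul (c d : Fin 3) :
    FreeMonoid.toList (FreeMonoid.of c * FreeMonoid.of d) = [c, d] := rfl

lemma sM_two_bs {m : ℕ} (e : Fin m → Fin 3) (hj : ∃ j, e j = 1) :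
    sM m 2 (bs e) = 0 := by
  obtain ⟨j0, hj0⟩ := hj
  rw [bs, sM_single, if_neg]
  intro hc
  have := hc j0
  rw [show FreeMonoid.toList (FreeMonoid.of (e j0)) = [e j0] from rfl, hj0,
    sList_single] at this
  simp at this

lemma sM_one_mul {m : ℕ} (e : Fin m → Fin 3) (z : Tm m) (hj : ∃ j, e j = 1) :
    sM m 1 (mulM (bs e) z) = 0 := by
  obtain ⟨j0, hj0⟩ := hj
  rw [mulM_sum_right (bs e) z, map_finsuppSum]
  apply Finset.sum_eq_zero
  intro q _
  dsimp only
  rw [bs, mulM_single_single, sM_single, if_neg]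
  intro hc
  have := hc j0
  rw [show FreeMonoid.toList (FreeMonoid.of (e j0) * q j0)
      = e j0 :: FreeMonoid.toList (q j0) from rfl, hj0, sList_one_cons] at this
  simp at this

lemma sList3_pair (x : Fin 3) : sList 3 [x, 1] = none := by revert x; decide

lemma key_step {m : ℕ} (e f : Fin m → Fin 3) (he : ∃! j, e j = 1) (hf : ∃! j, f j = 1)
    (i : ℕ) : sM m i (mulM (bs e) (bs f) + mulM (bs f) (bs e)) = 0 := by
  obtain ⟨j0, he1, he2⟩ := he
  obtain ⟨j1, hf1, hf2⟩ := hf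
  rw [map_add, bs, bs, mulM_single_single, mulM_single_single, sM_single, sM_single]
  by_cases hi : i = 2
  · subst hi
    by_cases hj : j0 = j1
    · subst hj
      rw [if_neg, if_neg, add_zero]
      · intro hc
        have := hc j0
        rw [toList_of_mul, hf1, he1] at this
        rw [show sList 2 [(1 : Fin 3), 1] = none from by decide] at this
        simp at this
      · intro hc
        have := hc j0
        rw [toList_of_mul, hf1, he1] at this
        rw [show sList 2 [(1 : Fin 3), 1] = none from by decide] at this
        simp at this
    · have hcond : sOK 2 (fun j => FreeMonoid.of (e j) * FreeMonoid.of (f j)) ↔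
          sOK 2 (fun j => FreeMonoid.of (f j) * FreeMonoid.of (e j)) := by
        unfold sOK
        constructor <;> intro h j <;> have hh := h j <;>
          rw [toList_of_mul] at hh ⊢ <;> rw [sList_pair_comm] <;> exact hh
      by_cases h : sOK 2 (fun j => FreeMonoid.of (e j) * FreeMonoid.of (f j))
      · rw [if_pos h, if_pos (hcond.1 h)]
        have hres : sRes 2 (fun j => FreeMonoid.of (e j) * FreeMonoid.of (f j))
            = sRes 2 (fun j => FreeMonoid.of (f j) * FreeMonoid.of (e j)) := by
          funext j
          unfold sRes
          rw [toList_of_mul, toList_of_mul, sList_pair_comm]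
        rw [hres, ← Finsupp.single_add]
        convert Finsupp.single_zero _
        case e'_2.e'_3 => rfl
        rw [koz_bs e f j0 j1 he1 hf2 hf1 he2, koz_bs f e j1 j0 hf1 he2 he1 hf2]
        rcases lt_or_gt_of_ne (Ne.symm hj) with hlt | hlt
        · rw [if_pos hlt, if_neg (lt_asymm hlt)]
          norm_num
        · rw [if_neg (lt_asymm hlt), if_pos hlt]
          norm_num
      · rw [if_neg h, if_neg (fun hc => h (hcond.2 hc)), add_zero]
  · have hkill : ∀ (g h : Fin m → Fin 3) (ja jb : Fin m), g ja = 1 → h jb = 1 →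
        ¬ sOK i (fun j => FreeMonoid.of (g j) * FreeMonoid.of (h j)) := by
      intro g h ja jb hga hhb hc
      match i, hi with
      | 0, _ =>
        have := hc ja
        rw [show sList 0 (FreeMonoid.toList _) = none from by rw [sList]; simp] at this
        simp at this
      | 1, _ =>
        have := hc ja
        rw [toList_of_mul, hga, sList_one_cons] at this
        simp at this
      | 3, _ =>
        have := hc jb
        rw [toList_of_mul, hhb, sList3_pair] at this
        simp at this
      | (n+4), _ =>
        have := hc ja
        rw [toList_of_mul, sList_of_big _ _ (by simp only [toList_of_mul, List.length_cons, List.length_nil]; omega)] at this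
        simp at this
    rw [if_neg (hkill e f j0 j1 he1 hf1), if_neg (hkill f e j1 j0 hf1 he1), add_zero]

def genSet (m : ℕ) : Set (Tm m) :=
  {f : Tm m | ∃ e : Fin m → Fin 3, (∃! j, e j = 1) ∧ f = bs e}

lemma comm_gen {m : ℕ} (e : Fin m → Fin 3) (he : ∃! j, e j = 1) (v : Tm m)
    (hv : v ∈ Submodule.span ℝ (genSet m)) :
    sM m 2 (mulM (bs e) v + mulM v (bs e)) = 0 := by
  refine Submodule.span_induction ?_ ?_ ?_ ?_ hv
  · rintro f ⟨f', hf', rfl⟩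
    exact key_step e f' he hf' 2
  · simp [mulM_zero_left, mulM_zero_right]
  · intro a b _ _ ha hb
    rw [mulM_add_right, mulM_add_left,
      show mulM (bs e) a + mulM (bs e) b + (mulM a (bs e) + mulM b (bs e))
        = (mulM (bs e) a + mulM a (bs e)) + (mulM (bs e) b + mulM b (bs e)) from by abel,
      map_add, ha, hb, add_zero]
  · intro c a _ ha
    rw [mulM_smul_right, mulM_smul_left, ← smul_add, map_smul, ha, smul_zero]

lemma comm_norm {m : ℕ} (u v : Tm m) (hu : u ∈ Submodule.span ℝ (genSet m))
    (hv : v ∈ Submodule.span ℝ (genSet m)) :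
    sM m 2 (mulM u v + mulM v u) = 0 := by
  refine Submodule.span_induction ?_ ?_ ?_ ?_ hu
  · rintro f ⟨e, he, rfl⟩
    exact comm_gen e he v hv
  · simp [mulM_zero_left, mulM_zero_right]
  · intro a b _ _ ha hb
    rw [mulM_add_left, mulM_add_right,
      show mulM a v + mulM b v + (mulM v a + mulM v b)
        = (mulM a v + mulM v a) + (mulM b v + mulM v b) from by abel,
      map_add, ha, hb, add_zero]
  · intro c a _ ha
    rw [mulM_smul_left, mulM_smul_right, ← smul_add, map_smul, ha, smul_zero]

lemma sq_zero {m : ℕ} (x : Tm m) (hx : x ∈ Submodule.span ℝ (genSet m)) :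
    sM m 2 (mulM x x) = 0 := by
  have h := comm_norm x x hx hx
  rw [map_add, ← two_smul ℝ] at h
  exact (smul_eq_zero.mp h).resolve_left (by norm_num)

lemma s1_zero {m : ℕ} (z x : Tm m) (hx : x ∈ Submodule.span ℝ (genSet m)) :
    sM m 1 (mulM x z) = 0 := by
  refine Submodule.span_induction ?_ ?_ ?_ ?_ hx
  · rintro f ⟨e, he, rfl⟩
    obtain ⟨j, hj, -⟩ := he
    exact sM_one_mul e z ⟨j, hj⟩
  · simp [mulM_zero_left]
  · intro a b _ _ ha hb
    rw [mulM_add_left, map_add, ha, hb, add_zero]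
  · intro c a _ ha
    rw [mulM_smul_left, map_smul, ha, smul_zero]

lemma s2x_zero {m : ℕ} (x : Tm m) (hx : x ∈ Submodule.span ℝ (genSet m)) :
    sM m 2 x = 0 := by
  refine Submodule.span_induction ?_ ?_ ?_ ?_ hx
  · rintro f ⟨e, he, rfl⟩
    obtain ⟨j, hj, -⟩ := he
    exact sM_two_bs e ⟨j, hj⟩
  · exact map_zero _
  · intro a b _ _ ha hb
    rw [map_add, ha, hb, add_zero]
  · intro c a _ ha
    rw [map_smul, ha, smul_zero]

def lenSub (m : ℕ) : Submodule ℝ (Tm m) where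
  carrier := {u | LenP 1 u}
  add_mem' := by
    classical
    intro a b ha hb p hp j
    rcases Finset.mem_union.1 (Finsupp.support_add hp) with h | h
    · exact ha p h j
    · exact hb p h j
  zero_mem' := by intro p hp j; simp at hp
  smul_mem' := by
    intro c u hu p hp j
    exact hu p (Finsupp.support_smul hp) j

lemma LenP_span {m : ℕ} (x : Tm m) (hx : x ∈ Submodule.span ℝ (genSet m)) :
    LenP 1 x := by
  have hle : Submodule.span ℝ (genSet m) ≤ lenSub m := by
    rw [Submodule.span_le]
    rintro f ⟨e, he, rfl⟩ p hp j
    rw [Finset.mem_singleton.1 (Finsupp.support_single_subset hp)]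
    rfl
  exact hle hx

lemma powM_two {m : ℕ} (x : Tm m) : powM x 2 = mulM x x := by
  rw [show powM x 2 = mulM x (powM x 1) from rfl, powM_one]

theorem stmt17 (m : ℕ) (hm : 1 ≤ m)
    (x : Tm m)
    (hx : x ∈ Submodule.span ℝ
      {f : Tm m | ∃ e : Fin m → Fin 3, (∃! j, e j = 1) ∧ f = bs e}) :
    -- key step: graded commutators of basis vectors are normalized,
    (∀ e f : Fin m → Fin 3, (∃! j, e j = 1) → (∃! j, f j = 1) →
      ∀ i : ℕ, sM m i (mulM (bs e) (bs f) + mulM (bs f) (bs e)) = 0) ∧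
    -- main claim: all ⋄-powers of x are normalized:
    (∀ k : ℕ, 1 ≤ k → ∀ i : ℕ, 1 ≤ i → i ≤ k + 1 → sM m i (powM x k) = 0) := by
  have hx' : x ∈ Submodule.span ℝ (genSet m) := hx
  constructor
  · exact fun e f he hf i => key_step e f he hf i
  · intro k hk i hi1 hik
    have hlen1 : LenP 1 x := LenP_span x hx'
    by_cases h1 : i = 1
    · subst h1
      obtain ⟨k', rfl⟩ : ∃ k', k = k' + 1 := ⟨k - 1, by omega⟩
      rw [powM]
      exact s1_zero (powM x k') x hx'
    · by_cases h2 : i = k + 1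
      · subst h2
        obtain ⟨k', rfl⟩ : ∃ k', k = k' + 1 := ⟨k - 1, by omega⟩
        rw [powM_add, powM_one]
        show sM m (k' + 2) _ = 0
        rw [shift_mul (powM x k') x (LenP_powM x hlen1 k'), s2x_zero x hx',
          mulM_zero_right]
      · obtain ⟨a, rfl⟩ : ∃ a, i = a + 2 := ⟨i - 2, by omega⟩
        obtain ⟨b, hb⟩ : ∃ b, k = a + (2 + b) := ⟨k - (a + 2), by omega⟩
        rw [hb, powM_add, powM_add, powM_two]
        rw [shift_mul _ _ (LenP_powM x hlen1 a),
          left_mul _ _ (LenP_mul x x hlen1 hlen1),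
          sq_zero x hx', mulM_zero_left, mulM_zero_right]


end
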